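/- Let N and Q be groups and let φ : Q → Aut(N) and f : Q × Q → N satisfy the extension conditions (E1) and (E2). Then there exists a group G, an injective group homomorphism ι : N → G whose range is a normal subgroup of G, and a function c : Q → G, such that: every element of G can be written uniquely in the form ι(n) · c(q) with n ∈ N, q ∈ Q; c(q) · ι(n) · c(q)⁻¹ = ι(φ_q(n)) for all n ∈ N, q ∈ Q; and c(q₁) · c(q₂) = ι(f(q₁,q₂)) · c(q₁q₂) for all q₁, q₂ ∈ Q. In particular, G is an extension of Q by N with data (φ, f): the quotient G/ι(N) is isomorphic to Q. -/

import Mathlib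

universe u v

/-- A witness that a group `G` is an extension of `Q` by `N` with data `(φ, f)`:
`ι : N → G` is an injective homomorphism with normal range, every element of `G`
is uniquely of the form `ι n * c q`, conjugation by `c q` realizes `φ q` on `N`,
the `c q` compose according to the 2-cocycle `f`, and `G ⧸ ι(N) ≅ Q`. -/
structure GroupExtensionWitness {N : Type u} {Q : Type v} [Group N] [Group Q]
    (φ : Q → MulAut N) (f : Q × Q → N) : Type (max u v + 1) where
  carrier : Type (max u v)
  [grp : Group carrier]
  ι : N →* carrier
  c : Q → carrier
  ι_injective : Function.Injective ι
  range_normal : ι.range.Normal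
  unique_decomp : ∀ g : carrier, ∃! p : N × Q, g = ι p.1 * c p.2
  conj_eq : ∀ (q : Q) (n : N), c q * ι n * (c q)⁻¹ = ι (φ q n)
  cocycle_eq : ∀ q₁ q₂ : Q, c q₁ * c q₂ = ι (f (q₁, q₂)) * c (q₁ * q₂)
  quotient_iso : Nonempty ((carrier ⧸ ι.range) ≃* Q)


namespace ExtensionConstruction

variable {N : Type u} {Q : Type v} [Group N] [Group Q]

/-- The underlying carrier of the extension: pairs `(n, q)`, tagged by the data `(φ, f)`. -/
@[ext]
structure Ext (φ : Q → MulAut N) (f : Q × Q → N) : Type (max u v) where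
  n : N
  q : Q

variable (φ : Q → MulAut N) (f : Q × Q → N)

instance : Mul (Ext φ f) := ⟨fun x y => ⟨x.n * φ x.q y.n * f (x.q, y.q), x.q * y.q⟩⟩
instance : One (Ext φ f) := ⟨⟨(f (1,1))⁻¹, 1⟩⟩
instance : Inv (Ext φ f) :=
  ⟨fun x => ⟨(f (1,1))⁻¹ * (f (x.q⁻¹, x.q))⁻¹ * (φ x.q⁻¹ x.n)⁻¹, x.q⁻¹⟩⟩

theorem mul_def (x y : Ext φ f) :
    x * y = ⟨x.n * φ x.q y.n * f (x.q, y.q), x.q * y.q⟩ := rfl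
theorem one_def : (1 : Ext φ f) = ⟨(f (1,1))⁻¹, 1⟩ := rfl
theorem inv_def (x : Ext φ f) :
    x⁻¹ = ⟨(f (1,1))⁻¹ * (f (x.q⁻¹, x.q))⁻¹ * (φ x.q⁻¹ x.n)⁻¹, x.q⁻¹⟩ := rfl

variable (hE1 : ∀ (q₁ q₂ : Q) (n : N),
      φ q₁ (φ q₂ n) = f (q₁, q₂) * φ (q₁ * q₂) n * (f (q₁, q₂))⁻¹)
variable (hE2 : ∀ q₁ q₂ q₃ : Q,
      f (q₁, q₂) * f (q₁ * q₂, q₃) = φ q₁ (f (q₂, q₃)) * f (q₁, q₂ * q₃))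

include hE2 in
theorem phi_one_f (q : Q) : φ 1 (f (1, q)) = f (1,1) := by
  have h := hE2 1 1 q
  simp only [one_mul] at h
  exact (mul_right_cancel h).symm

include hE1 hE2 in
theorem phi_one_apply (n : N) : φ 1 n = f (1,1) * n * (f (1,1))⁻¹ := by
  have ha : φ 1 (f (1,1)) = f (1,1) := phi_one_f φ f hE2 1
  have h := hE1 1 1 n
  simp only [one_mul] at h
  apply (φ 1).injective
  rw [h, map_mul, map_mul, ha, map_inv, ha]

include hE1 hE2 in
theorem f_one_left (q : Q) : f (1, q) = f (1,1) := by
  have h := phi_one_f φ f hE2 q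
  rw [phi_one_apply φ f hE1 hE2] at h
  have h2 : f (1,1) * f (1,q) = f (1,1) * f (1,1) := by
    have := congrArg (· * f (1,1)) h
    simpa [mul_assoc] using this
  exact mul_left_cancel h2

include hE2 in
theorem f_one_right (q : Q) : f (q, 1) = φ q (f (1,1)) := by
  have h := hE2 q 1 1
  simp only [mul_one] at h
  exact mul_right_cancel h


include hE1 hE2 in
theorem emul_assoc (x y z : Ext φ f) : x * y * z = x * (y * z) := by
  obtain ⟨n₁, q₁⟩ := x; obtain ⟨n₂, q₂⟩ := y; obtain ⟨n₃, q₃⟩ := z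
  simp only [mul_def, map_mul]
  congr 1
  · rw [hE1 q₁ q₂ n₃]
    simp only [mul_assoc]
    rw [← hE2 q₁ q₂ q₃]
    simp only [mul_assoc, inv_mul_cancel_left]
  · exact mul_assoc q₁ q₂ q₃

include hE1 hE2 in
theorem eone_mul (x : Ext φ f) : 1 * x = x := by
  obtain ⟨n, q⟩ := x
  simp only [mul_def, one_def, one_mul]
  congr 1
  · rw [phi_one_apply φ f hE1 hE2, f_one_left φ f hE1 hE2 q]
    group

omit hE1 hE2 in
theorem einv_mul (x : Ext φ f) : x⁻¹ * x = 1 := by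
  obtain ⟨n, q⟩ := x
  simp only [mul_def, inv_def, one_def]
  congr 1
  · group
  · exact inv_mul_cancel q

noncomputable def extGroup (hE1 : ∀ (q₁ q₂ : Q) (n : N),
      φ q₁ (φ q₂ n) = f (q₁, q₂) * φ (q₁ * q₂) n * (f (q₁, q₂))⁻¹)
    (hE2 : ∀ q₁ q₂ q₃ : Q,
      f (q₁, q₂) * f (q₁ * q₂, q₃) = φ q₁ (f (q₂, q₃)) * f (q₁, q₂ * q₃)) :
    Group (Ext φ f) :=
  Group.ofLeftAxioms (emul_assoc φ f hE1 hE2) (eone_mul φ f hE1 hE2) (einv_mul φ f)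


end ExtensionConstruction

open ExtensionConstruction

/-- If `φ : Q → Aut N` and `f : Q × Q → N` satisfy the extension conditions
(E1) `φ_{q₁} ∘ φ_{q₂} = inn_{f(q₁,q₂)} ∘ φ_{q₁q₂}` and
(E2) `f(q₁,q₂)·f(q₁q₂,q₃) = φ_{q₁}(f(q₂,q₃))·f(q₁,q₂q₃)`,
then there exists an extension of `Q` by `N` with data `(φ, f)`. -/
theorem extension_exists_of_data {N : Type u} {Q : Type v} [Group N] [Group Q]
    (φ : Q → MulAut N) (f : Q × Q → N)
    (hE1 : ∀ (q₁ q₂ : Q) (n : N),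
      φ q₁ (φ q₂ n) = f (q₁, q₂) * φ (q₁ * q₂) n * (f (q₁, q₂))⁻¹)
    (hE2 : ∀ q₁ q₂ q₃ : Q,
      f (q₁, q₂) * f (q₁ * q₂, q₃) = φ q₁ (f (q₂, q₃)) * f (q₁, q₂ * q₃)) :
    Nonempty (GroupExtensionWitness φ f) := by
  letI : Group (Ext φ f) := extGroup φ f hE1 hE2
  -- the inclusion of `N`
  have hι_mul : ∀ n₁ n₂ : N,
      (⟨n₁ * n₂ * (f (1,1))⁻¹, 1⟩ : Ext φ f)
        = ⟨n₁ * (f (1,1))⁻¹, 1⟩ * ⟨n₂ * (f (1,1))⁻¹, 1⟩ := by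
    intro n₁ n₂
    simp only [mul_def]
    congr 1
    · rw [phi_one_apply φ f hE1 hE2, f_one_left φ f hE1 hE2 1]
      group
    · exact (one_mul 1).symm
  let ι : N →* Ext φ f :=
    { toFun := fun n => ⟨n * (f (1,1))⁻¹, 1⟩
      map_one' := by simp only [one_mul]; rfl
      map_mul' := fun n₁ n₂ => hι_mul n₁ n₂ }
  let c : Q → Ext φ f := fun q => ⟨1, q⟩
  have hdecomp : ∀ (n : N) (q : Q), ι n * c q = ⟨n, q⟩ := by
    intro n q
    show (⟨n * (f (1,1))⁻¹, 1⟩ : Ext φ f) * ⟨1, q⟩ = ⟨n, q⟩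
    simp only [mul_def, map_one, mul_one, one_mul]
    congr 1
    rw [f_one_left φ f hE1 hE2 q]
    group
  have hιinj : Function.Injective ι := by
    intro n₁ n₂ h
    have : n₁ * (f (1,1))⁻¹ = n₂ * (f (1,1))⁻¹ := congrArg Ext.n h
    exact mul_right_cancel this
  -- the projection to `Q`
  let π : Ext φ f →* Q :=
    { toFun := Ext.q
      map_one' := rfl
      map_mul' := fun _ _ => rfl }
  have hπsurj : Function.Surjective π := fun q => ⟨⟨1, q⟩, rfl⟩
  have hker : ι.range = π.ker := by
    ext x
    constructor
    · rintro ⟨n, rfl⟩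
      show (1 : Q) = 1
      rfl
    · intro hx
      refine ⟨x.n * f (1,1), ?_⟩
      have hq : x.q = 1 := hx
      show (⟨x.n * f (1,1) * (f (1,1))⁻¹, 1⟩ : Ext φ f) = x
      rw [mul_inv_cancel_right, ← hq]
  haveI hN : ι.range.Normal := hker ▸ π.normal_ker
  refine ⟨⟨Ext φ f, ι, c, hιinj, hN, ?_, ?_, ?_, ?_⟩⟩
  · intro g
    refine ⟨(g.n, g.q), by show g = ι g.n * c g.q; rw [hdecomp], ?_⟩
    rintro ⟨n', q'⟩ h
    erw [hdecomp] at h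
    have h1 : g.n = n' := congrArg Ext.n h
    have h2 : g.q = q' := congrArg Ext.q h
    exact Prod.ext h1.symm h2.symm
  · intro q n
    have key : c q * ι n = ι (φ q n) * c q := by
      rw [hdecomp]
      show (⟨1, q⟩ : Ext φ f) * ⟨n * (f (1,1))⁻¹, 1⟩ = ⟨φ q n, q⟩
      simp only [mul_def, one_mul, mul_one, map_mul, map_inv]
      congr 1
      rw [f_one_right φ f hE2 q]
      group
    erw [key, mul_inv_cancel_right]
  · intro q₁ q₂
    erw [hdecomp]
    show (⟨1, q₁⟩ : Ext φ f) * ⟨1, q₂⟩ = ⟨f (q₁, q₂), q₁ * q₂⟩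
    simp only [mul_def, map_one, mul_one, one_mul]
  · exact ⟨(QuotientGroup.quotientMulEquivOfEq hker).trans
      (QuotientGroup.quotientKerEquivOfSurjective π hπsurj)⟩
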